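/- Let $r > 0$. Then $-\frac{\zeta'}{\zeta}(1+r) \leq \frac{1}{r} - \log(2\pi) + \frac{\gamma}{2} + 1 + \frac{1}{2}\frac{\Gamma'}{\Gamma}\left(\frac{3+r}{2}\right)$, where $\gamma$ is the Euler–Mascheroni constant and $\Gamma$ the Gamma function. -/

import Mathlib

open Real Complex MeasureTheory Set Filter Asymptotics HurwitzZeta

noncomputable section


/-- θ(t) - 1 -/
def phiK (t : ℝ) : ℝ := evenKernel 0 t - 1

/-- complex indicator version -/
def gOne : ℝ → ℂ := (Set.Ioi (1:ℝ)).indicator (fun t => (phiK t : ℂ))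

/-- real mellin-type integral over (1,∞) -/
def mker (u : ℝ) : ℝ := ∫ t in Set.Ioi (1:ℝ), t ^ (u - 1) * phiK t

lemma phiK_nonneg {t : ℝ} (ht : 0 < t) : 0 ≤ phiK t := by
  have h := hasSum_int_evenKernel 0 ht
  simp only [add_zero] at h
  have h0 : rexp (-π * (0:ℤ)^2 * t) = 1 := by norm_num
  have := le_hasSum h 0 (fun i _ => (Real.exp_pos _).le)
  simp only [phiK, sub_nonneg]
  calc (1:ℝ) = rexp (-π * ((0:ℤ):ℝ)^2 * t) := by norm_num
  _ ≤ evenKernel 0 t := le_hasSum h 0 (fun i _ => (Real.exp_pos _).le)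

lemma phiK_bigO : ∃ p : ℝ, 0 < p ∧ phiK =O[atTop] (fun t => rexp (-p * t)) := by
  obtain ⟨p, hp, hO⟩ := isBigO_atTop_evenKernel_sub 0
  refine ⟨p, hp, ?_⟩
  simpa [show phiK = fun t => evenKernel 0 t - 1 from rfl] using hO

lemma continuousOn_phiK : ContinuousOn phiK (Set.Ioi (0:ℝ)) :=
  (continuousOn_evenKernel 0).sub continuousOn_const


lemma integrable_mker (c : ℝ) :
    IntegrableOn (fun t => t ^ c * phiK t) (Set.Ioi (1:ℝ)) := by
  obtain ⟨p, hp, hO⟩ := phiK_bigO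
  rw [isBigO_iff] at hO
  obtain ⟨C₀, hC₀⟩ := hO
  rw [eventually_atTop] at hC₀
  obtain ⟨T, hT⟩ := hC₀
  set C := max C₀ 0 with hC
  have hTbd : ∀ b ≥ T, ‖phiK b‖ ≤ C * rexp (-p * b) := by
    intro b hb
    refine (hT b hb).trans ?_
    rw [Real.norm_eq_abs, abs_of_pos (Real.exp_pos _)]
    exact mul_le_mul_of_nonneg_right (le_max_left _ _) (Real.exp_pos _).le
  set T' := max T 1 with hT'
  have hcont : ∀ s : Set ℝ, s ⊆ {x : ℝ | 0 < x} →
      ContinuousOn (fun t : ℝ => t ^ c * phiK t) s := by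
    intro s hs
    refine ContinuousOn.mul (ContinuousOn.rpow_const continuousOn_id ?_) ?_
    · intro x hx
      exact Or.inl (by simpa using (hs hx).ne')
    · exact continuousOn_phiK.mono hs
  have hsplit : Set.Ioi (1:ℝ) ⊆ Set.Ioc (1:ℝ) T' ∪ Set.Ioi T' := by
    intro x hx
    rcases le_or_gt x T' with h | h
    · exact Or.inl ⟨hx, h⟩
    · exact Or.inr h
  refine IntegrableOn.mono_set (IntegrableOn.union ?_ ?_) hsplit
  · refine IntegrableOn.mono_set ?_ (Set.Ioc_subset_Icc_self)
    refine ContinuousOn.integrableOn_compact isCompact_Icc ?_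
    exact hcont _ (fun x hx => lt_of_lt_of_le zero_lt_one hx.1)
  · have hint0 : IntegrableOn (fun t : ℝ => t ^ (max c 0) * rexp (-p * t ^ (1:ℝ)))
        (Set.Ioi (0:ℝ)) :=
      integrableOn_rpow_mul_exp_neg_mul_rpow (lt_of_lt_of_le neg_one_lt_zero (le_max_right c 0))
        zero_lt_one hp
    have hint : IntegrableOn (fun t : ℝ => C * (t ^ (max c 0) * rexp (-p * t)))
        (Set.Ioi T') := by
      refine IntegrableOn.congr_fun ((hint0.mono_set ?_).const_mul C) (fun x hx => by rw [Real.rpow_one]) measurableSet_Ioi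
      exact fun x hx => lt_trans (lt_of_lt_of_le zero_lt_one (le_max_right T 1)) hx
    refine Integrable.mono' hint ?_ ?_
    · refine (hcont _ (fun x hx => lt_of_lt_of_le zero_lt_one (le_of_lt (lt_of_le_of_lt (le_max_right T 1) hx)))).aestronglyMeasurable
        measurableSet_Ioi
    · filter_upwards [ae_restrict_mem measurableSet_Ioi] with t ht
      have ht1 : (1:ℝ) < t := lt_of_le_of_lt (le_max_right T 1) ht
      have htT : T ≤ t := le_of_lt (lt_of_le_of_lt (le_max_left T 1) ht)
      have h0t : (0:ℝ) < t := lt_trans zero_lt_one ht1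
      have hb := hTbd t htT
      calc ‖t ^ c * phiK t‖ = t ^ c * ‖phiK t‖ := by
            rw [norm_mul, Real.norm_eq_abs (t ^ c), abs_of_pos (Real.rpow_pos_of_pos h0t c)]
      _ ≤ t ^ (max c 0) * (C * rexp (-p * t)) := by
            refine mul_le_mul (Real.rpow_le_rpow_of_exponent_le ht1.le (le_max_left c 0)) hb
              (norm_nonneg _) (Real.rpow_pos_of_pos h0t _).le
      _ = C * (t ^ (max c 0) * rexp (-p * t)) := by ring



lemma gOne_integrand (u : ℝ) : (fun t : ℝ => (t:ℂ) ^ ((u:ℂ) - 1) • gOne t) =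
    (Set.Ioi (1:ℝ)).indicator (fun t => ((t ^ (u-1) * phiK t : ℝ) : ℂ)) := by
  funext t
  rcases lt_or_ge 1 t with ht | ht
  · rw [Set.indicator_of_mem (Set.mem_Ioi.mpr ht), gOne,
      Set.indicator_of_mem (Set.mem_Ioi.mpr ht)]
    rw [smul_eq_mul, Complex.ofReal_mul, Complex.ofReal_cpow (by linarith), Complex.ofReal_sub,
      Complex.ofReal_one]
  · rw [Set.indicator_of_notMem (by simpa using ht), gOne,
      Set.indicator_of_notMem (by simpa using ht), smul_zero]

lemma mellinConvergent_gOne (u : ℝ) : MellinConvergent gOne (u:ℂ) := by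
  unfold MellinConvergent
  rw [gOne_integrand u]
  rw [IntegrableOn, integrable_indicator_iff measurableSet_Ioi, IntegrableOn,
    Measure.restrict_restrict measurableSet_Ioi]
  have : Set.Ioi (1:ℝ) ∩ Set.Ioi 0 = Set.Ioi 1 := by
    ext x; simp only [Set.mem_inter_iff, Set.mem_Ioi]; constructor
    · exact fun h => h.1
    · exact fun h => ⟨h, by linarith⟩
  rw [this]
  exact (integrable_mker (u-1)).ofReal

lemma mellin_gOne (u : ℝ) : mellin gOne (u:ℂ) = ((mker u : ℝ) : ℂ) := by
  unfold mellin
  rw [gOne_integrand u]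
  rw [integral_indicator measurableSet_Ioi, Measure.restrict_restrict measurableSet_Ioi]
  have : Set.Ioi (1:ℝ) ∩ Set.Ioi 0 = Set.Ioi 1 := by
    ext x; simp only [Set.mem_inter_iff, Set.mem_Ioi]; constructor
    · exact fun h => h.1
    · exact fun h => ⟨h, by linarith⟩
  rw [this]
  exact integral_ofReal

lemma f_modif_eq : (hurwitzEvenFEPair 0).f_modif =
    fun t => gOne t + (t:ℂ) ^ (-(1/2) : ℂ) • gOne (t ^ (-1:ℝ)) := by
  funext t
  have hk : (hurwitzEvenFEPair 0).k = 1/2 := rfl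
  have hε : (hurwitzEvenFEPair 0).ε = 1 := rfl
  have hf : (hurwitzEvenFEPair 0).f = fun x => ((evenKernel 0 x : ℝ) : ℂ) := rfl
  have hf₀ : (hurwitzEvenFEPair 0).f₀ = 1 := by
    show (if (0 : UnitAddCircle) = 0 then (1:ℂ) else 0) = 1
    simp
  have hg₀ : (hurwitzEvenFEPair 0).g₀ = 1 := rfl
  rw [WeakFEPair.f_modif, hk, hε, hf, hf₀, hg₀]
  rcases le_or_gt t 0 with ht | ht
  · have h1 : t ∉ Set.Ioi (1:ℝ) := by simp; linarith
    have h2 : t ∉ Set.Ioo (0:ℝ) 1 := by simp; intro h; linarith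
    have h3 : t ^ (-1:ℝ) ≤ 0 := by
      rw [show (-1:ℝ) = ((-1 : ℤ) : ℝ) by norm_num, Real.rpow_intCast]
      simpa using inv_nonpos.mpr ht
    have h4 : t ^ (-1:ℝ) ∉ Set.Ioi (1:ℝ) := by simp; linarith
    rw [Pi.add_apply, Set.indicator_of_notMem h1, Set.indicator_of_notMem h2, gOne,
      Set.indicator_of_notMem h1, Set.indicator_of_notMem h4]
    simp
  rcases lt_trichotomy t 1 with ht1 | ht1 | ht1
  · -- 0 < t < 1
    have h1 : t ∉ Set.Ioi (1:ℝ) := by simp; linarith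
    have h2 : t ∈ Set.Ioo (0:ℝ) 1 := ⟨ht, ht1⟩
    have hinv : t ^ (-1:ℝ) = t⁻¹ := by
      rw [show (-1:ℝ) = ((-1 : ℤ) : ℝ) by norm_num, Real.rpow_intCast]; simp
    have h3 : t ^ (-1:ℝ) ∈ Set.Ioi (1:ℝ) := by
      rw [hinv]; exact Set.mem_Ioi.mpr (one_lt_inv_iff₀.mpr ⟨ht, ht1⟩)
    rw [Pi.add_apply, Set.indicator_of_notMem h1, Set.indicator_of_mem h2, gOne,
      Set.indicator_of_notMem h1, Set.indicator_of_mem h3, zero_add]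
    -- use functional equation
    have hfe := evenKernel_functional_equation 0 t
    rw [← evenKernel_eq_cosKernel_of_zero, one_div t] at hfe
    -- hfe : evenKernel 0 t = 1 / t ^ (1/2:ℝ) * evenKernel 0 t⁻¹
    have htp : (0:ℝ) < t ^ ((1:ℝ)/2) := Real.rpow_pos_of_pos ht _
    have hfe2 : evenKernel 0 t⁻¹ = t ^ ((1:ℝ)/2) * evenKernel 0 t := by
      rw [hfe]
      field_simp
    have hphi : phiK (t ^ (-1:ℝ)) = t ^ ((1:ℝ)/2) * evenKernel 0 t - 1 := by
      rw [hinv, phiK, hfe2]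
    have hcp : (t:ℂ) ^ (-(1/2):ℂ) = ((t ^ (-(1/2):ℝ) : ℝ) : ℂ) := by
      rw [Complex.ofReal_cpow ht.le]
      norm_num
    have key : t ^ (-(1/2):ℝ) * (t ^ ((1:ℝ)/2) * evenKernel 0 t - 1)
        = evenKernel 0 t - t ^ (-(1/2):ℝ) := by
      have h12 : t ^ (-(1/2):ℝ) * t ^ ((1:ℝ)/2) = 1 := by
        rw [← Real.rpow_add ht]; norm_num
      linear_combination evenKernel 0 t * h12
    rw [hphi, hcp]
    simp only [smul_eq_mul, ← Complex.ofReal_mul, key]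
    push_cast
    ring
  · -- t = 1
    subst ht1
    have h1 : (1:ℝ) ∉ Set.Ioi (1:ℝ) := by simp
    have h2 : (1:ℝ) ∉ Set.Ioo (0:ℝ) 1 := by simp
    have h3 : (1:ℝ) ^ (-1:ℝ) ∉ Set.Ioi (1:ℝ) := by
      rw [Real.one_rpow]; simp
    rw [Pi.add_apply, Set.indicator_of_notMem h1, Set.indicator_of_notMem h2, gOne,
      Set.indicator_of_notMem h1, Set.indicator_of_notMem h3]
    simp
  · -- 1 < t
    have h1 : t ∈ Set.Ioi (1:ℝ) := ht1
    have h2 : t ∉ Set.Ioo (0:ℝ) 1 := by simp; intro h; linarith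
    have hinv : t ^ (-1:ℝ) = t⁻¹ := by
      rw [show (-1:ℝ) = ((-1 : ℤ) : ℝ) by norm_num, Real.rpow_intCast]; simp
    have h3 : t ^ (-1:ℝ) ∉ Set.Ioi (1:ℝ) := by
      rw [hinv]; simp only [Set.mem_Ioi, not_lt]
      exact le_of_lt (inv_lt_one_of_one_lt₀ ht1)
    rw [Pi.add_apply, Set.indicator_of_mem h1, Set.indicator_of_notMem h2, gOne,
      Set.indicator_of_mem h1, Set.indicator_of_notMem h3, smul_zero, add_zero, add_zero,
      phiK]
    push_cast
    ring


def Lfun (x : ℝ) : ℝ := (mker (x/2) + mker ((1-x)/2)) / 2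

lemma mellin_f_modif (u : ℝ) :
    mellin (hurwitzEvenFEPair 0).f_modif (u:ℂ)
      = ((mker u : ℝ):ℂ) + ((mker (1/2 - u) : ℝ):ℂ) := by
  rw [f_modif_eq]
  have hcast : ((u:ℂ) + (-(1/2))) / (((-1:ℝ)):ℂ) = (((1/2 - u : ℝ)):ℂ) := by push_cast; ring
  have hconv2 : MellinConvergent (fun t : ℝ => (t:ℂ) ^ (-(1/2) : ℂ) • gOne (t ^ (-1:ℝ))) (u:ℂ) := by
    rw [MellinConvergent.cpow_smul, MellinConvergent.comp_rpow (by norm_num : (-1:ℝ) ≠ 0), hcast]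
    exact mellinConvergent_gOne _
  have hadd := (hasMellin_add (mellinConvergent_gOne u) hconv2).2
  rw [hadd, mellin_gOne u, mellin_cpow_smul, mellin_comp_rpow, hcast, mellin_gOne]
  norm_num

lemma Lambda0_real (x : ℝ) : completedRiemannZeta₀ (x:ℂ) = ((Lfun x : ℝ) : ℂ) := by
  show (hurwitzEvenFEPair 0).Λ₀ ((x:ℂ)/2) / 2 = _
  show mellin (hurwitzEvenFEPair 0).f_modif ((x:ℂ)/2) / 2 = _
  have h1 : ((x:ℂ)/2) = (((x/2 : ℝ)):ℂ) := by push_cast; ring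
  have h2 : (1/2 - x/2 : ℝ) = (1-x)/2 := by ring
  rw [h1, mellin_f_modif (x/2), h2, Lfun]
  push_cast
  ring

lemma mker_nonneg (u : ℝ) : 0 ≤ mker u := by
  refine setIntegral_nonneg measurableSet_Ioi (fun t ht => ?_)
  have h0 : (0:ℝ) < t := lt_trans zero_lt_one ht
  exact mul_nonneg (Real.rpow_nonneg h0.le _) (phiK_nonneg h0)

lemma Lfun_nonneg (x : ℝ) : 0 ≤ Lfun x := by
  have := mker_nonneg (x/2); have := mker_nonneg ((1-x)/2); unfold Lfun; linarith

lemma kernel_mono {t a b : ℝ} (ht : 1 ≤ t) (ha : 1/2 ≤ a) (hab : a ≤ b) :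
    t ^ (a/2 - 1) + t ^ ((1-a)/2 - 1) ≤ t ^ (b/2 - 1) + t ^ ((1-b)/2 - 1) := by
  have h0 : (0:ℝ) < t := lt_of_lt_of_le zero_lt_one ht
  set c := a/2 - 1/4 with hc
  set d := b/2 - 1/4 with hd
  have hc0 : 0 ≤ c := by rw [hc]; linarith
  have hcd : c ≤ d := by rw [hc, hd]; linarith
  set X := t ^ c with hX
  set Y := t ^ d with hY
  have hX1 : 1 ≤ X := Real.one_le_rpow ht hc0
  have hXY : X ≤ Y := Real.rpow_le_rpow_of_exponent_le ht hcd
  have hXpos : 0 < X := Real.rpow_pos_of_pos h0 _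
  have hYpos : 0 < Y := Real.rpow_pos_of_pos h0 _
  have hkey : X + X⁻¹ ≤ Y + Y⁻¹ := by
    have hXY1 : 1 ≤ X * Y := by nlinarith
    have hinv : (X*Y)⁻¹ ≤ 1 := inv_le_one_of_one_le₀ hXY1
    have key2 : Y + Y⁻¹ - (X + X⁻¹) = (Y - X) * (1 - (X*Y)⁻¹) := by
      field_simp
      ring
    have h3 : 0 ≤ (Y - X) * (1 - (X*Y)⁻¹) := mul_nonneg (by linarith) (by linarith)
    linarith
  have e1 : ∀ u : ℝ, t ^ (u - 3/4 : ℝ) = t ^ (u:ℝ) * t ^ (-(3/4) : ℝ) := by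
    intro u; rw [← Real.rpow_add h0]; ring_nf
  have ea : a/2 - 1 = c - 3/4 := by rw [hc]; ring
  have ea' : (1-a)/2 - 1 = -c - 3/4 := by rw [hc]; ring
  have eb : b/2 - 1 = d - 3/4 := by rw [hd]; ring
  have eb' : (1-b)/2 - 1 = -d - 3/4 := by rw [hd]; ring
  have hneg : ∀ u : ℝ, t ^ (-u : ℝ) = (t ^ (u:ℝ))⁻¹ := fun u => Real.rpow_neg h0.le u ▸ rfl
  rw [ea, ea', eb, eb', e1 c, e1 d, show (-c - 3/4 : ℝ) = (-c) - 3/4 by ring,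
    show (-d - 3/4 : ℝ) = (-d) - 3/4 by ring, e1 (-c), e1 (-d),
    Real.rpow_neg h0.le c, Real.rpow_neg h0.le d]
  have h34 : 0 < t ^ (-(3/4) : ℝ) := Real.rpow_pos_of_pos h0 _
  calc X * t ^ (-(3/4):ℝ) + X⁻¹ * t ^ (-(3/4):ℝ) = (X + X⁻¹) * t ^ (-(3/4):ℝ) := by ring
  _ ≤ (Y + Y⁻¹) * t ^ (-(3/4):ℝ) := by
      exact mul_le_mul_of_nonneg_right hkey h34.le
  _ = Y * t ^ (-(3/4):ℝ) + Y⁻¹ * t ^ (-(3/4):ℝ) := by ring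

lemma Lfun_mono {a b : ℝ} (ha : 1/2 ≤ a) (hab : a ≤ b) : Lfun a ≤ Lfun b := by
  unfold Lfun
  have h1 : mker (a/2) + mker ((1-a)/2) ≤ mker (b/2) + mker ((1-b)/2) := by
    unfold mker
    rw [← integral_add (integrable_mker _) (integrable_mker _),
      ← integral_add (integrable_mker _) (integrable_mker _)]
    refine setIntegral_mono_on ((integrable_mker _).add (integrable_mker _))
      ((integrable_mker _).add (integrable_mker _)) measurableSet_Ioi (fun t ht => ?_)
    have h0 : (0:ℝ) < t := lt_trans zero_lt_one ht
    have hker := kernel_mono (le_of_lt ht) ha hab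
    have hphi := phiK_nonneg h0
    nlinarith [hker, hphi]
  linarith



lemma Lfun_hasDeriv (σ : ℝ) :
    HasDerivAt Lfun (deriv completedRiemannZeta₀ (σ:ℂ)).re σ := by
  have hd : HasDerivAt completedRiemannZeta₀ (deriv completedRiemannZeta₀ (σ:ℂ)) (σ:ℂ) :=
    (differentiable_completedZeta₀ (σ:ℂ)).hasDerivAt
  have hre := hd.real_of_complex
  have heq : (fun x : ℝ => (completedRiemannZeta₀ (x:ℂ)).re) = Lfun := by
    funext x; rw [Lambda0_real]; exact Complex.ofReal_re _
  rwa [heq] at hre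

lemma deriv_Lambda0_re_nonneg {σ : ℝ} (hσ : 1 < σ) :
    0 ≤ (deriv completedRiemannZeta₀ (σ:ℂ)).re := by
  have hre := Lfun_hasDeriv σ
  rw [hasDerivAt_iff_tendsto_slope] at hre
  have hmono : ∀ y ∈ Set.Ioi σ, 0 ≤ slope Lfun σ y := by
    intro y hy
    rw [slope_def_field]
    have h1 : Lfun σ ≤ Lfun y := Lfun_mono (by linarith) (le_of_lt hy)
    have h2 : (0:ℝ) < y - σ := by simpa using sub_pos.mpr (show σ < y from hy)
    exact div_nonneg (by linarith) h2.le
  have htend : Filter.Tendsto (slope Lfun σ) (nhdsWithin σ (Set.Ioi σ))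
      (nhds ((deriv completedRiemannZeta₀ (σ:ℂ)).re)) :=
    hre.mono_left (nhdsWithin_mono σ (fun y hy => ne_of_gt hy))
  exact ge_of_tendsto htend (eventually_nhdsWithin_of_forall hmono)

-- real version of Gammaℝ
def Gr (x : ℝ) : ℝ := π ^ (-x/2) * Real.Gamma (x/2)

lemma Gammaℝ_real {x : ℝ} : Gammaℝ (x:ℂ) = ((Gr x : ℝ) : ℂ) := by
  rw [Gammaℝ_def, Gr]
  rw [Complex.ofReal_mul, Complex.ofReal_cpow pi_pos.le, ← Complex.Gamma_ofReal]
  push_cast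
  ring_nf

lemma Gr_pos {x : ℝ} (hx : 0 < x) : 0 < Gr x :=
  mul_pos (Real.rpow_pos_of_pos pi_pos _) (Real.Gamma_pos_of_pos (by positivity))

lemma Gamma_hasDeriv {y : ℝ} (hy : 0 < y) :
    HasDerivAt Real.Gamma (deriv Real.Gamma y) y := by
  refine (Real.differentiableAt_Gamma (fun m => ?_)).hasDerivAt
  have : (0:ℝ) ≤ m := Nat.cast_nonneg m
  linarith
lemma Gr_hasDeriv {x : ℝ} (hx : 0 < x) :
    HasDerivAt Gr (Gr x * (-Real.log π / 2) + π ^ (-x/2) * (deriv Real.Gamma (x/2) / 2)) x := by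
  have hpow : ∀ y : ℝ, π ^ (-y/2 : ℝ) = rexp (Real.log π * (-y/2)) := by
    intro y; rw [Real.rpow_def_of_pos pi_pos]
  have h1 : HasDerivAt (fun y : ℝ => π ^ (-y/2 : ℝ))
      (π ^ (-x/2 : ℝ) * (-Real.log π / 2)) x := by
    have hinner : HasDerivAt (fun y : ℝ => Real.log π * (-y/2)) (Real.log π * (-1/2)) x := by
      simpa using (((hasDerivAt_id x).neg.div_const 2).const_mul (Real.log π))
    have := hinner.exp
    simp_rw [← hpow] at this
    convert this using 1
    rw [hpow]
    ring
  have h2 : HasDerivAt (fun y : ℝ => Real.Gamma (y/2)) (deriv Real.Gamma (x/2) / 2) x := by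
    have := (Gamma_hasDeriv (by positivity : (0:ℝ) < x/2)).comp x ((hasDerivAt_id x).div_const 2)
    simpa [div_eq_mul_inv, Function.comp_def] using this
  have := h1.mul h2
  refine this.congr_deriv ?_
  unfold Gr
  ring

lemma deriv_Gamma_add_one {y : ℝ} (hy : 0 < y) :
    deriv Real.Gamma (y+1) = Real.Gamma y + y * deriv Real.Gamma y := by
  have hΓy := Gamma_hasDeriv hy
  have hf1 : HasDerivAt (fun x : ℝ => Real.Gamma (x+1)) (deriv Real.Gamma (y+1)) y := by
    have := (Gamma_hasDeriv (by positivity : (0:ℝ) < y+1)).comp y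
      ((hasDerivAt_id y).add_const 1)
    simpa [Function.comp_def] using this
  have hf2 : HasDerivAt (fun x : ℝ => x * Real.Gamma x)
      (1 * Real.Gamma y + y * deriv Real.Gamma y) y := (hasDerivAt_id y).mul hΓy
  have heq : (fun x : ℝ => Real.Gamma (x+1)) =ᶠ[nhds y] (fun x : ℝ => x * Real.Gamma x) := by
    filter_upwards [eventually_gt_nhds hy] with x hx
    exact Real.Gamma_add_one (ne_of_gt hx)
  have huniq := (hf2.congr_of_eventuallyEq heq).unique hf1
  linarith [huniq]

lemma numeric : 2 * Real.log 2 + Real.log π ≤ Real.eulerMascheroniConstant + 2 := by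
  have hγ := Real.eulerMascheroniSeq_lt_eulerMascheroniConstant 31
  rw [Real.eulerMascheroniSeq] at hγ
  have hlog32 : Real.log ((31:ℕ) + 1) = 5 * Real.log 2 := by
    norm_num
    rw [show (32:ℝ) = 2^5 by norm_num, Real.log_pow]
    norm_num
  have hh31 : (harmonic 31 : ℝ) ≥ 4.0272 := by
    norm_num [harmonic]
  have hlog2 := Real.log_two_lt_d9
  have hpie : Real.log π ≤ π / rexp 1 := by
    have h1 : Real.log (π / rexp 1) ≤ π / rexp 1 - 1 :=
      Real.log_le_sub_one_of_pos (by positivity)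
    rw [Real.log_div pi_ne_zero (Real.exp_ne_zero 1), Real.log_exp] at h1
    linarith
  have hpie2 : π / rexp 1 < 1.15573 := by
    rw [div_lt_iff₀ (Real.exp_pos 1)]
    have h1 : (1.15573 : ℝ) * 2.7182818283 ≤ 1.15573 * rexp 1 :=
      mul_le_mul_of_nonneg_left (le_of_lt Real.exp_one_gt_d9) (by norm_num)
    have := Real.pi_lt_d6
    nlinarith
  rw [hlog32] at hγ
  nlinarith [hγ, hh31, hlog2, hpie, hpie2]



lemma zeta_eq_real {x : ℝ} (hx : 1 < x) :
    riemannZeta (x:ℂ) = ((∑' (n:ℕ), 1/((n:ℝ)+1)^x : ℝ) : ℂ) := by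
  rw [zeta_eq_tsum_one_div_nat_add_one_cpow (by simpa using hx), Complex.ofReal_tsum]
  congr 1; funext n
  rw [Complex.ofReal_div, Complex.ofReal_one, Complex.ofReal_cpow (by positivity)]
  push_cast
  ring_nf

lemma zsum_summable {x : ℝ} (hx : 1 < x) :
    Summable (fun n : ℕ => 1/((n:ℝ)+1)^x) := by
  have h := (summable_nat_add_iff 1).mpr (Real.summable_one_div_nat_rpow.mpr hx)
  refine h.congr (fun n => ?_)
  push_cast
  ring_nf

lemma zeta_re_ge_one {x : ℝ} (hx : 1 < x) : 1 ≤ (riemannZeta (x:ℂ)).re := by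
  rw [zeta_eq_real hx, Complex.ofReal_re]
  have h0 : 1/((0:ℕ):ℝ)+1 = 1 := by norm_num
  calc (1:ℝ) = 1/(((0:ℕ):ℝ)+1)^x := by norm_num
  _ ≤ ∑' (n:ℕ), 1/((n:ℝ)+1)^x :=
      Summable.le_tsum (zsum_summable hx) 0 (fun i _ => by positivity)

lemma zeta_ofReal {x : ℝ} (hx : 1 < x) :
    riemannZeta (x:ℂ) = (((riemannZeta (x:ℂ)).re : ℝ) : ℂ) := by
  rw [zeta_eq_real hx, Complex.ofReal_re]

set_option maxHeartbeats 1000000 in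
open Real in
theorem stmt15 (r : ℝ) (hr : r > 0) :
    -((deriv riemannZeta (1 + (r : ℂ)) / riemannZeta (1 + (r : ℂ))).re) ≤
      1 / r - Real.log (2 * π) + Real.eulerMascheroniConstant / 2 + 1 +
        (1 / 2) * (deriv Real.Gamma ((3 + r) / 2) / Real.Gamma ((3 + r) / 2)) := by
  set σ : ℝ := 1 + r with hσdef
  have hσ1 : 1 < σ := by simp [hσdef]; linarith
  have hσ0 : 0 < σ := by linarith
  have hσne : σ ≠ 0 := ne_of_gt hσ0
  have hrne : (1:ℝ) - σ ≠ 0 := by simp [hσdef]; linarith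
  have hScast : (1 + (r:ℂ)) = ((σ:ℝ):ℂ) := by rw [hσdef]; push_cast; ring
  rw [hScast]
  -- zeta side
  have hSne1 : ((σ:ℝ):ℂ) ≠ 1 := by
    intro h
    have : σ = 1 := by exact_mod_cast h
    linarith
  have hζdiff : DifferentiableAt ℂ riemannZeta ((σ:ℝ):ℂ) := differentiableAt_riemannZeta hSne1
  set z' : ℝ := (deriv riemannZeta ((σ:ℝ):ℂ)).re with hz'def
  set z : ℝ := (riemannZeta ((σ:ℝ):ℂ)).re with hzdef
  have hzre : HasDerivAt (fun x : ℝ => (riemannZeta ((x:ℝ):ℂ)).re) z' σ :=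
    hζdiff.hasDerivAt.real_of_complex
  have hz1 : 1 ≤ z := zeta_re_ge_one hσ1
  have hzpos : 0 < z := by linarith
  have hLHS : (deriv riemannZeta ((σ:ℝ):ℂ) / riemannZeta ((σ:ℝ):ℂ)).re = z' / z := by
    rw [zeta_ofReal hσ1, Complex.div_ofReal_re]
  rw [hLHS]
  -- Lambda0 side
  set L' : ℝ := (deriv completedRiemannZeta₀ ((σ:ℝ):ℂ)).re with hL'def
  have hLre : HasDerivAt Lfun L' σ := Lfun_hasDeriv σ
  have hL'0 : 0 ≤ L' := deriv_Lambda0_re_nonneg hσ1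
  have hL0 : 0 ≤ Lfun σ := Lfun_nonneg σ
  -- G side
  have hGpos : 0 < Gr σ := Gr_pos hσ0
  set G' : ℝ := Gr σ * (-Real.log π / 2) + π ^ (-σ/2) * (deriv Real.Gamma (σ/2) / 2) with hG'def
  have hGre : HasDerivAt Gr G' σ := Gr_hasDeriv hσ0
  have hΓpos : 0 < Real.Gamma (σ/2) := Real.Gamma_pos_of_pos (by positivity)
  -- the function identity
  have hfeq : (fun x : ℝ => (riemannZeta ((x:ℝ):ℂ)).re * Gr x) =ᶠ[nhds σ]
      (fun x : ℝ => Lfun x - 1/x - 1/(1-x)) := by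
    filter_upwards [eventually_gt_nhds hσ1] with x hx
    have hx0 : (0:ℝ) < x := lt_trans zero_lt_one hx
    have hxne : ((x:ℝ):ℂ) ≠ 0 := by exact_mod_cast ne_of_gt hx0
    have hΓne : Gammaℝ ((x:ℝ):ℂ) ≠ 0 := Gammaℝ_ne_zero_of_re_pos (by simpa using hx0)
    have h1 : riemannZeta ((x:ℝ):ℂ) * Gammaℝ ((x:ℝ):ℂ) = completedRiemannZeta ((x:ℝ):ℂ) := by
      rw [riemannZeta_def_of_ne_zero hxne]
      field_simp
    have h2 : completedRiemannZeta ((x:ℝ):ℂ)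
        = completedRiemannZeta₀ ((x:ℝ):ℂ) - 1/((x:ℝ):ℂ) - 1/(1 - ((x:ℝ):ℂ)) :=
      completedRiemannZeta_eq _
    have h3 : riemannZeta ((x:ℝ):ℂ) * Gammaℝ ((x:ℝ):ℂ)
        = ((Lfun x - 1/x - 1/(1-x) : ℝ) : ℂ) := by
      rw [h1, h2, Lambda0_real]
      push_cast
      ring
    rw [zeta_ofReal hx, Gammaℝ_real, ← Complex.ofReal_mul] at h3
    have := Complex.ofReal_inj.mp h3
    simpa using this
  -- derivative of both sides
  have hd1 : HasDerivAt (fun x : ℝ => (riemannZeta ((x:ℝ):ℂ)).re * Gr x)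
      (z' * Gr σ + z * G') σ := hzre.mul hGre
  have hinv1 : HasDerivAt (fun x : ℝ => 1/x) (-(1/σ^2)) σ := by
    simpa [one_div] using hasDerivAt_inv hσne
  have hinv2 : HasDerivAt (fun x : ℝ => 1/(1-x)) (1/(1-σ)^2) σ := by
    have hi := (hasDerivAt_inv hrne).comp σ ((hasDerivAt_const σ (1:ℝ)).sub (hasDerivAt_id σ))
    simpa [one_div, Function.comp_def] using hi
  have hd2 : HasDerivAt (fun x : ℝ => Lfun x - 1/x - 1/(1-x))
      (L' - (-(1/σ^2)) - 1/(1-σ)^2) σ := (hLre.sub hinv1).sub hinv2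
  have hderiv_eq : z' * Gr σ + z * G' = L' - (-(1/σ^2)) - 1/(1-σ)^2 :=
    (hd1.congr_of_eventuallyEq hfeq.symm).unique hd2
  have hval_eq : z * Gr σ = Lfun σ - 1/σ - 1/(1-σ) := hfeq.self_of_nhds
  -- xi' ≥ 0 assembly
  set Q : ℝ := σ*(σ-1)/2 with hQdef
  have hQpos : 0 < Q := by
    rw [hQdef]; nlinarith
  have hE : Q*(z' * Gr σ + z * G') + (σ-1/2)*(z * Gr σ)
      = (σ-1/2)*(Lfun σ) + Q*L' := by
    rw [hderiv_eq, hval_eq, hQdef]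
    field_simp
    ring
  have hE' : 0 ≤ (σ-1/2)*(Lfun σ) + Q*L' := by
    have h1 : 0 ≤ (σ-1/2)*(Lfun σ) := mul_nonneg (by linarith) hL0
    have h2 : 0 ≤ Q*L' := mul_nonneg hQpos.le hL'0
    linarith
  -- digamma pieces
  set ψ : ℝ := deriv Real.Gamma (σ/2) / Real.Gamma (σ/2) with hψdef
  have hG'G : G' = Gr σ * (-Real.log π / 2 + ψ/2) := by
    rw [hG'def, hψdef, Gr]
    field_simp
  have hdig : deriv Real.Gamma ((3+r)/2) / Real.Gamma ((3+r)/2) = 2/σ + ψ := by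
    have h32 : (3+r)/2 = σ/2 + 1 := by rw [hσdef]; ring
    have hy : (0:ℝ) < σ/2 := by positivity
    rw [h32, deriv_Gamma_add_one hy, Real.Gamma_add_one (ne_of_gt hy), hψdef]
    field_simp
  -- main bound
  have hA : -(z'/z) ≤ 1/σ + 1/r - Real.log π/2 + ψ/2 := by
    have h1σ : σ - 1 = r := by rw [hσdef]; ring
    have hAQ : (1/σ + 1/r) * Q = σ - 1/2 := by
      rw [hQdef, h1σ]
      have hrne' : r ≠ 0 := ne_of_gt hr
      field_simp
      ring
    have h6 : (z' + (1/σ + 1/r - Real.log π/2 + ψ/2) * z) * (Q * Gr σ)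
        = (σ-1/2)*(Lfun σ) + Q*L' := by
      rw [← hE, hG'G]
      linear_combination (z * Gr σ) * hAQ
    have h7 : 0 ≤ (z' + (1/σ + 1/r - Real.log π/2 + ψ/2) * z) * (Q * Gr σ) := by
      rw [h6]; exact hE'
    have h8 : 0 ≤ z' + (1/σ + 1/r - Real.log π/2 + ψ/2) * z := by
      by_contra hcon
      push_neg at hcon
      nlinarith [mul_pos hQpos hGpos]
    rw [show -(z'/z) = (-z')/z by ring, div_le_iff₀ hzpos]
    nlinarith [h8]
  rw [hdig, Real.log_mul two_ne_zero (ne_of_gt pi_pos)]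
  have hnum := numeric
  have hγ : Real.eulerMascheroniConstant / 2 + 1 - Real.log 2 - Real.log π / 2 ≥ 0 := by
    linarith
  have h2σ : (2:ℝ)/σ = 2*(1/σ) := by ring
  linarith [hA, h2σ]

end
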